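/- Let G be a finite simple graph on vertex set V with two distinguished terminal vertices s ≠ d, and suppose V contains at least one vertex other than s and d. Let (T, X) be a nice tree decomposition of G of width at most w with at least two bags, such that for every leaf index i of T with unique neighbor j, X j ⊊ X i. Then there exists a vertex v ∈ V with v ∉ {s, d} whose degree in G is at most w + 1 and such that the star-mesh elimination of v from G has treewidth at most w. -/

import Mathlib

/-- `(T, X)` is a tree decomposition of the graph `G`: `T` is a tree on the index set,
every vertex is in some bag, every edge of `G` has both ends in some bag, and for every
vertex the set of bags containing it induces a connected subgraph of `T`. -/
structure IsTreeDecomp {V I : Type*} (G : SimpleGraph V) (T : SimpleGraph I)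
    (X : I → Finset V) : Prop where
  isTree : T.IsTree
  mem_bag : ∀ v : V, ∃ i, v ∈ X i
  edge_bag : ∀ u v : V, G.Adj u v → ∃ i, u ∈ X i ∧ v ∈ X i
  support_connected : ∀ v : V, (T.induce {i | v ∈ X i}).Connected

/-- A tree decomposition is nice if adjacent bags are equal or differ by exactly one
vertex. -/
def IsNice {V I : Type*} [DecidableEq V] (T : SimpleGraph I) (X : I → Finset V) : Prop :=
  ∀ i j : I, T.Adj i j →
    X i = X j ∨ (∃ v ∉ X j, X i = insert v (X j)) ∨ (∃ v ∉ X i, X j = insert v (X i))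

/-- The graph `G` has treewidth at most `w`: it admits a tree decomposition all of whose
bags have at most `w + 1` vertices. -/
def TreewidthLE {V : Type*} (G : SimpleGraph V) (w : ℕ) : Prop :=
  ∃ (I : Type) (_ : Fintype I) (T : SimpleGraph I) (X : I → Finset V),
    IsTreeDecomp G T X ∧ ∀ i, (X i).card ≤ w + 1

/-- The star-mesh elimination of the vertex `v` from `G`: the graph on the vertices of
`G` other than `v` in which two distinct vertices are adjacent iff they were adjacent in
`G` or were both `G`-neighbors of `v`. -/
def starMesh {V : Type*} (G : SimpleGraph V) (v : V) : SimpleGraph {x : V // x ≠ v} where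
  Adj x y := x ≠ y ∧ (G.Adj x.1 y.1 ∨ (G.Adj x.1 v ∧ G.Adj y.1 v))
  symm := ⟨by
    rintro x y ⟨hxy, h⟩
    exact ⟨hxy.symm, h.imp (fun h' => h'.symm) fun h' => ⟨h'.2, h'.1⟩⟩⟩
  loopless := ⟨fun x h => h.1 rfl⟩

open SimpleGraph

section WalkAux

variable {I : Type*} {G : SimpleGraph I}

lemma getVert_injOn' {u v : I} {p : G.Walk u v} (hp : p.IsPath) :
    ∀ i, i ≤ p.length → ∀ j, j ≤ p.length → p.getVert i = p.getVert j → i = j := by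
  induction p with
  | nil => intro i hi j hj _; simp at hi hj; omega
  | @cons a b c h q ih =>
    rw [SimpleGraph.Walk.cons_isPath_iff] at hp
    intro i hi j hj hij
    match i, j with
    | 0, 0 => rfl
    | 0, (j+1) =>
      exfalso
      simp only [Walk.getVert_zero, Walk.getVert_cons_succ] at hij
      exact hp.2 (Walk.mem_support_iff_exists_getVert.2 ⟨j, hij.symm, by
        simpa [Walk.length_cons] using hj⟩)
    | (i+1), 0 =>
      exfalso
      simp only [Walk.getVert_zero, Walk.getVert_cons_succ] at hij
      exact hp.2 (Walk.mem_support_iff_exists_getVert.2 ⟨i, hij, by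
        simpa [Walk.length_cons] using hi⟩)
    | (i+1), (j+1) =>
      simp only [Walk.getVert_cons_succ] at hij
      have := ih hp.1 i (by simpa [Walk.length_cons] using hi) j
        (by simpa [Walk.length_cons] using hj) hij
      omega

lemma isPath_concat' {u v w : I} {p : G.Walk u v} (hp : p.IsPath) (h : G.Adj v w)
    (hw : w ∉ p.support) : (p.concat h).IsPath := by
  rw [← Walk.isPath_reverse_iff, Walk.reverse_concat]
  exact Walk.IsPath.cons (by rwa [Walk.isPath_reverse_iff]) (by rwa [Walk.support_reverse, List.mem_reverse])

lemma tree_path_unique {T : SimpleGraph I} (hT : T.IsTree) {a b : I} {p q : T.Walk a b}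
    (hp : p.IsPath) (hq : q.IsPath) : p = q := by
  have := hT.IsAcyclic.path_unique ⟨p, hp⟩ ⟨q, hq⟩
  exact congrArg Subtype.val this

lemma exists_segment :
    ∀ {x y : I} (W : G.Walk x y), W.IsPath → ∀ a b : ℕ, a ≤ b → b ≤ W.length →
      ∃ q : G.Walk (W.getVert a) (W.getVert b), q.IsPath ∧
        (∀ z ∈ q.support, z ∈ W.support) ∧ ∀ c, a ≤ c → c ≤ b → W.getVert c ∈ q.support := by
  intro x y W
  induction W with
  | nil =>
    intro _ a b hab hb
    simp only [Walk.length_nil, Nat.le_zero] at hb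
    subst hb
    interval_cases a
    exact ⟨Walk.nil, Walk.IsPath.nil, by simp, fun c hc hc' => by
      interval_cases c; simp⟩
  | @cons u v' y' h q ih =>
    intro hW a b hab hb
    rw [Walk.cons_isPath_iff] at hW
    match a, b with
    | 0, 0 =>
      exact ⟨(Walk.nil (u := u)).copy (Walk.getVert_zero _).symm (Walk.getVert_zero _).symm,
        by simp [Walk.isPath_copy],
        by simp [Walk.support_copy], fun c hc hc' => by interval_cases c; simp [Walk.support_copy]⟩
    | 0, (b+1) =>
      obtain ⟨q0, hq0, hsub, hmem⟩ := ih hW.1 0 b (Nat.zero_le _)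
        (by simpa [Walk.length_cons] using hb)
      refine ⟨(Walk.cons h (q0.copy (Walk.getVert_zero q) rfl)).copy
        (Walk.getVert_zero _).symm (Walk.getVert_cons_succ _ _).symm, ?_, ?_, ?_⟩
      · rw [Walk.isPath_copy, Walk.cons_isPath_iff]
        refine ⟨by simpa [Walk.isPath_copy] using hq0, ?_⟩
        simp only [Walk.support_copy]
        intro hc
        exact hW.2 (hsub _ hc)
      · intro z hz
        simp only [Walk.support_copy, Walk.support_cons, List.mem_cons] at hz
        rcases hz with rfl | hz
        · simp
        · simp [Walk.support_cons]
          right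
          exact hsub _ hz
      · intro c _ hc
        match c with
        | 0 => rw [Walk.support_copy]; simp
        | (c+1) =>
          simp only [Walk.getVert_cons_succ, Walk.support_copy, Walk.support_cons,
            List.mem_cons]
          right
          rw [Walk.support_copy]
          exact hmem c (Nat.zero_le _) (by omega)
    | (a+1), (b+1) =>
      obtain ⟨q0, hq0, hsub, hmem⟩ := ih hW.1 a b (by omega)
        (by simpa [Walk.length_cons] using hb)
      refine ⟨q0.copy (Walk.getVert_cons_succ _ _).symm (Walk.getVert_cons_succ _ _).symm,
        by simpa [Walk.isPath_copy] using hq0, ?_, ?_⟩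
      · intro z hz
        simp only [Walk.support_copy] at hz
        simp [Walk.support_cons]
        right
        exact hsub _ hz
      · intro c hc hc'
        match c with
        | (c+1) =>
          simp only [Walk.getVert_cons_succ, Walk.support_copy]
          exact hmem c (by omega) (by omega)

end WalkAux


section Aux2
variable {I : Type*}

lemma induce_connected_walk [DecidableEq I] {T : SimpleGraph I} {S : Set I} (hc : (T.induce S).Connected)
    {a b : I} (ha : a ∈ S) (hb : b ∈ S) :
    ∃ p : T.Walk a b, p.IsPath ∧ ∀ z ∈ p.support, z ∈ S := by
  obtain ⟨r⟩ := hc ⟨a, ha⟩ ⟨b, hb⟩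
  let r' : T.Walk a b := r.map (SimpleGraph.Embedding.induce S).toHom
  refine ⟨(r'.toPath : T.Walk a b), (r'.toPath).2, fun z hz => ?_⟩
  have hz' : z ∈ r'.support := Walk.support_toPath_subset r' hz
  replace hz' : z ∈ (r.map (SimpleGraph.Embedding.induce S).toHom).support := hz'
  rw [Walk.support_map] at hz'
  obtain ⟨⟨z', hz'S⟩, _, rfl⟩ := List.mem_map.1 hz'
  exact hz'S

lemma interval_lemma [DecidableEq I] {T : SimpleGraph I} (hT : T.IsTree) {S : Set I}
    (hc : (T.induce S).Connected) {x y : I} {W : T.Walk x y} (hW : W.IsPath)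
    {a b c : ℕ} (hac : a ≤ c) (hcb : c ≤ b) (hb : b ≤ W.length)
    (ha : W.getVert a ∈ S) (hbS : W.getVert b ∈ S) : W.getVert c ∈ S := by
  obtain ⟨q, hq, _, hmem⟩ := exists_segment W hW a b (le_trans hac hcb) hb
  obtain ⟨p, hp, hpS⟩ := induce_connected_walk hc ha hbS
  have := tree_path_unique hT hq hp
  subst this
  exact hpS _ (hmem c hac hcb)

lemma leaf_nbr {T : SimpleGraph I} [Fintype I] [DecidableRel T.Adj] {i : I}
    (hi : T.degree i = 1) : ∃ j, T.Adj i j ∧ ∀ x, T.Adj i x → x = j := by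
  rw [← card_neighborFinset_eq_degree, Finset.card_eq_one] at hi
  obtain ⟨j, hj⟩ := hi
  refine ⟨j, ?_, fun x hx => ?_⟩
  · have : j ∈ T.neighborFinset i := hj ▸ Finset.mem_singleton_self j
    exact (mem_neighborFinset _ _ _).1 this
  · have : x ∈ T.neighborFinset i := (mem_neighborFinset _ _ _).2 hx
    rw [hj, Finset.mem_singleton] at this
    exact this

lemma exists_two_leaves {T : SimpleGraph I} [Fintype I] [DecidableEq I] [DecidableRel T.Adj]
    (hT : T.IsTree) (h2 : 2 ≤ Fintype.card I) :
    ∃ a b, a ≠ b ∧ T.degree a = 1 ∧ T.degree b = 1 := by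
  have hdegpos : ∀ v : I, 0 < T.degree v := by
    intro v
    rw [degree_pos_iff_exists_adj]
    obtain ⟨u, hu⟩ := Fintype.exists_ne_of_one_lt_card (by omega) v
    obtain ⟨r⟩ := hT.isConnected v u
    exact ⟨r.getVert 1, Walk.adj_snd (Walk.not_nil_of_ne (Ne.symm hu))⟩
  have hsum : ∑ v : I, T.degree v = 2 * T.edgeFinset.card :=
    T.sum_degrees_eq_twice_card_edges
  have hcardE : T.edgeFinset.card + 1 = Fintype.card I := hT.card_edgeFinset
  by_contra hcon
  push_neg at hcon
  have hL : (Finset.univ.filter (fun v => T.degree v = 1)).card ≤ 1 := by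
    by_contra hL
    push_neg at hL
    obtain ⟨u, hu, v, hv, huv⟩ := Finset.one_lt_card.1 hL
    simp only [Finset.mem_filter] at hu hv
    exact hcon u v huv hu.2 hv.2
  have hbound : ∀ v : I, v ∉ Finset.univ.filter (fun v => T.degree v = 1) → 2 ≤ T.degree v := by
    intro v hv
    simp only [Finset.mem_filter, Finset.mem_univ, true_and] at hv
    have := hdegpos v
    omega
  have : 2 * Fintype.card I - 1 ≤ ∑ v : I, T.degree v := by
    classical
    set L := Finset.univ.filter (fun v => T.degree v = 1) with hLdef
    have hsplit : ∑ v : I, T.degree v =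
        ∑ v ∈ L, T.degree v + ∑ v ∈ Lᶜ, T.degree v := by
      rw [← Finset.sum_add_sum_compl L]
    have h1 : ∑ v ∈ L, T.degree v ≥ L.card := by
      calc L.card = ∑ _v ∈ L, 1 := by simp
        _ ≤ ∑ v ∈ L, T.degree v := Finset.sum_le_sum (fun v hv => hdegpos v)
    have h2' : ∑ v ∈ Lᶜ, T.degree v ≥ 2 * Lᶜ.card := by
      calc 2 * Lᶜ.card = ∑ _v ∈ Lᶜ, 2 := by simp [mul_comm]
        _ ≤ ∑ v ∈ Lᶜ, T.degree v := Finset.sum_le_sum (fun v hv => hbound v (by simpa using hv))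
    have hcards : L.card + Lᶜ.card = Fintype.card I := by
      simp [Finset.card_compl]
      omega
    omega
  omega

end Aux2

section Aux3
variable {I : Type*}

lemma isPath_loop_eq_nil {T : SimpleGraph I} {a : I} {q : T.Walk a a} (hq : q.IsPath) :
    q = Walk.nil := by
  cases q with
  | nil => rfl
  | cons h p =>
    rw [Walk.cons_isPath_iff] at hq
    exact absurd (Walk.end_mem_support p) hq.2

lemma extend_to_leaf {T : SimpleGraph I} [Fintype I] :
    ∀ n {r f : I} (p : T.Walk r f), p.IsPath → Fintype.card I - p.length ≤ n →
      ∃ (g : I) (q : T.Walk r g), q.IsPath ∧ (∀ z ∈ p.support, z ∈ q.support) ∧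
        ∀ x, T.Adj g x → x ∈ q.support := by
  intro n
  induction n with
  | zero =>
    intro r f p hp hn
    exact absurd hp.length_lt (by omega)
  | succ n ih =>
    intro r f p hp hn
    by_cases hx : ∃ x, T.Adj f x ∧ x ∉ p.support
    · obtain ⟨x, hadj, hxs⟩ := hx
      obtain ⟨g, q, hq, hsub, hcl⟩ := ih (p.concat hadj) (isPath_concat' hp hadj hxs)
        (by
          have := hp.length_lt
          rw [Walk.length_concat]
          omega)
      refine ⟨g, q, hq, fun z hz => hsub z ?_, hcl⟩
      rw [Walk.support_concat]
      exact List.mem_append_left _ hz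
    · push_neg at hx
      exact ⟨f, p, hp, fun z hz => hz, fun x h => hx x h⟩

lemma endpoint_degree_one {T : SimpleGraph I} [Fintype I] [DecidableEq I] [DecidableRel T.Adj]
    (hT : T.IsTree) {r g : I} (hrg : r ≠ g) {q : T.Walk r g} (hq : q.IsPath)
    (hcl : ∀ x, T.Adj g x → x ∈ q.support) : T.degree g = 1 := by
  have key : ∀ x (hx : T.Adj g x),
      q.support = (q.takeUntil x (hcl x hx)).support ++ [g] := by
    intro x hx
    have hxs : x ∈ q.support := hcl x hx
    have hxg : x ≠ g := fun h => T.irrefl (h ▸ hx)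
    have hnd : q.support.Nodup := hq.2
    have hsplit : q.support = (q.takeUntil x hxs).support ++ (q.dropUntil x hxs).support.tail := by
      rw [← Walk.support_append, Walk.take_spec]
    have hgdrop : g ∈ (q.dropUntil x hxs).support.tail := by
      have hgs : g ∈ (q.dropUntil x hxs).support := Walk.end_mem_support _
      rw [Walk.support_eq_cons] at hgs
      rcases List.mem_cons.1 hgs with h | h
      · exact absurd h.symm hxg
      · exact h
    have hgnot : g ∉ (q.takeUntil x hxs).support := by
      rw [hsplit] at hnd
      exact fun hgin => (List.disjoint_of_nodup_append hnd) hgin hgdrop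
    have hr : ((q.takeUntil x hxs).concat hx.symm).IsPath :=
      isPath_concat' (hq.takeUntil hxs) hx.symm hgnot
    have heq : (q.takeUntil x hxs).concat hx.symm = q := tree_path_unique hT hr hq
    conv_lhs => rw [← heq]
    rw [Walk.support_concat]
  have uniq : ∀ x₁ x₂, T.Adj g x₁ → T.Adj g x₂ → x₁ = x₂ := by
    intro x₁ x₂ h₁ h₂
    have e1 := key x₁ h₁
    have e2 := key x₂ h₂
    have hA : (q.takeUntil x₁ (hcl x₁ h₁)).support = (q.takeUntil x₂ (hcl x₂ h₂)).support :=
      (List.append_inj' (e1.symm.trans e2) rfl).1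
    have l1 : (q.takeUntil x₁ (hcl x₁ h₁)).support.getLast (by simp) = x₁ :=
      Walk.getLast_support _
    have l2 : (q.takeUntil x₂ (hcl x₂ h₂)).support.getLast (by simp) = x₂ :=
      Walk.getLast_support _
    rw [← l1, ← l2]
    congr 1
  have hnonnil : ¬ q.Nil := Walk.not_nil_of_ne hrg
  have hrev : ¬ q.reverse.Nil := Walk.not_nil_of_ne (Ne.symm hrg)
  have hadj0 : T.Adj g (q.reverse.getVert 1) := Walk.adj_snd hrev
  have : T.neighborFinset g = {q.reverse.getVert 1} := by
    ext x
    simp only [mem_neighborFinset, Finset.mem_singleton]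
    exact ⟨fun h => uniq x _ h hadj0, fun h => h ▸ hadj0⟩
  rw [← card_neighborFinset_eq_degree, this, Finset.card_singleton]

end Aux3


section Decomp
variable {V : Type*} {I : Type*}

lemma treewidthLE_of_decomp [Fintype I] {G : SimpleGraph V} {T : SimpleGraph I}
    {X : I → Finset V} {w : ℕ} (h : IsTreeDecomp G T X) (hw : ∀ i, (X i).card ≤ w + 1) :
    TreewidthLE G w := by
  classical
  set n := Fintype.card I with hn
  let e : I ≃ Fin n := Fintype.equivFin I
  let T₀ : SimpleGraph (Fin n) := SimpleGraph.comap (e.symm : Fin n → I) T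
  have hadj : ∀ a b : Fin n, T₀.Adj a b ↔ T.Adj (e.symm a) (e.symm b) := fun a b => Iff.rfl
  have hconn_map : ∀ (S : Set I), (T.induce S).Connected →
      (T₀.induce ((fun a => e.symm a) ⁻¹' S)).Connected := by
    intro S hS
    let f : (T.induce S) →g (T₀.induce ((fun a => e.symm a) ⁻¹' S)) :=
      ⟨fun x => ⟨e x.1, by simp [x.2]⟩, by
        rintro ⟨x, hx⟩ ⟨y, hy⟩ hxy
        simp only [SimpleGraph.comap_adj, Function.Embedding.coe_subtype] at hxy ⊢
        show T.Adj (e.symm (e x)) (e.symm (e y))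
        simpa using hxy⟩
    have hsurj : Function.Surjective f := by
      rintro ⟨a, ha⟩
      refine ⟨⟨e.symm a, ha⟩, ?_⟩
      apply Subtype.ext
      exact e.apply_symm_apply a
    exact hS.map f hsurj
  have htree : T₀.IsTree := by
    constructor
    · -- connected
      let ψ : T ≃g T₀ := ⟨e, by
        intro x y
        show T.Adj (e.symm (e x)) (e.symm (e y)) ↔ T.Adj x y
        simp⟩
      exact (SimpleGraph.Iso.connected_iff ψ).1 h.isTree.isConnected
    · intro a c hc
      let φ : T₀ →g T := ⟨fun a => e.symm a, fun h => h⟩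
      have hinj : Function.Injective φ := fun x y h => e.symm.injective h
      exact h.isTree.IsAcyclic (c.map φ) (hc.map hinj)
  refine ⟨Fin n, inferInstance, T₀, fun a => X (e.symm a), ⟨htree, ?_, ?_, ?_⟩, fun a => hw _⟩
  · intro v
    obtain ⟨i, hi⟩ := h.mem_bag v
    exact ⟨e i, by simpa using hi⟩
  · intro u v huv
    obtain ⟨i, hi⟩ := h.edge_bag u v huv
    exact ⟨e i, by simpa using hi⟩
  · intro v
    have := hconn_map {i | v ∈ X i} (h.support_connected v)
    exact this

end Decomp

section Main
variable {V : Type*} {I : Type*} [DecidableEq V]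

lemma main_decomp [Fintype I] {G : SimpleGraph V} {T : SimpleGraph I} {w : ℕ} {v : V}
    (hT : T.IsTree) (C : I → Finset V)
    (hsz : ∀ j, (C j).card ≤ w + 1)
    (hvC : ∀ j, v ∉ C j)
    (hmem : ∀ x, x ≠ v → ∃ j, x ∈ C j)
    (hedge : ∀ x y : {x : V // x ≠ v}, (starMesh G v).Adj x y → ∃ j, x.1 ∈ C j ∧ y.1 ∈ C j)
    (hconn : ∀ x : V, x ≠ v → (T.induce {j | x ∈ C j}).Connected) :
    TreewidthLE (starMesh G v) w := by
  have hdec : DecidablePred (fun x : V => x ≠ v) := fun x => instDecidableNot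
  let X : I → Finset {x : V // x ≠ v} := fun j => (C j).subtype (fun x => x ≠ v)
  have hXmem : ∀ (x : {x : V // x ≠ v}) (j : I), x ∈ X j ↔ x.1 ∈ C j := by
    intro x j
    simp [X, Finset.mem_subtype]
  refine treewidthLE_of_decomp (T := T) (X := X) ⟨hT, ?_, ?_, ?_⟩ ?_
  · intro x
    obtain ⟨j, hj⟩ := hmem x.1 x.2
    exact ⟨j, (hXmem x j).2 hj⟩
  · intro x y hxy
    obtain ⟨j, hj1, hj2⟩ := hedge x y hxy
    exact ⟨j, (hXmem x j).2 hj1, (hXmem y j).2 hj2⟩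
  · intro x
    have hset : {j | x ∈ X j} = {j | x.1 ∈ C j} := by
      ext j
      exact hXmem x j
    rw [hset]
    exact hconn x.1 x.2
  · intro j
    calc (X j).card ≤ (C j).card := by
          apply Finset.card_le_card_of_injOn (fun x => x.1)
          · intro x hx
            exact (hXmem x j).1 hx
          · intro a _ b _ hab
            exact Subtype.ext hab
      _ ≤ w + 1 := hsz j

lemma elim_A [Fintype I] {G : SimpleGraph V} [DecidableRel G.Adj] [Fintype V]
    {T : SimpleGraph I} {X : I → Finset V} {w : ℕ}
    (htd : IsTreeDecomp G T X) (hw : ∀ i, (X i).card ≤ w + 1) {v : V} {m : I}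
    (hN : ∀ u, G.Adj v u → u ∈ X m) :
    G.degree v ≤ w + 1 ∧ TreewidthLE (starMesh G v) w := by
  constructor
  · rw [← card_neighborFinset_eq_degree]
    calc (G.neighborFinset v).card ≤ (X m).card := by
          apply Finset.card_le_card
          intro u hu
          exact hN u ((SimpleGraph.mem_neighborFinset _ _ _).1 hu)
      _ ≤ w + 1 := hw m
  · apply main_decomp htd.isTree (fun j => (X j).erase v)
    · intro j
      exact le_trans (Finset.card_le_card (Finset.erase_subset _ _)) (hw j)
    · intro j
      exact Finset.notMem_erase _ _
    · intro x hx
      obtain ⟨j, hj⟩ := htd.mem_bag x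
      exact ⟨j, Finset.mem_erase.2 ⟨hx, hj⟩⟩
    · rintro ⟨x, hx⟩ ⟨y, hy⟩ (⟨hne, hadj⟩ : _ ∧ _)
      rcases hadj with hadj | ⟨hxv, hyv⟩
      · obtain ⟨j, hj1, hj2⟩ := htd.edge_bag x y hadj
        exact ⟨j, Finset.mem_erase.2 ⟨hx, hj1⟩, Finset.mem_erase.2 ⟨hy, hj2⟩⟩
      · refine ⟨m, Finset.mem_erase.2 ⟨hx, hN x hxv.symm⟩, Finset.mem_erase.2 ⟨hy, hN y hyv.symm⟩⟩
    · intro x hx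
      have hset : {j | x ∈ (X j).erase v} = {j | x ∈ X j} := by
        ext j
        simp [Finset.mem_erase, hx]
      rw [hset]
      exact htd.support_connected x

lemma elim_B [Fintype I] {G : SimpleGraph V} [DecidableRel G.Adj] [Fintype V]
    {T : SimpleGraph I} {X : I → Finset V} {w : ℕ}
    (htd : IsTreeDecomp G T X) (hw : ∀ i, (X i).card ≤ w + 1) {v t : V} {m : I}
    (htv : t ≠ v) (hmv : v ∈ X m)
    (hN : ∀ u, G.Adj v u → u ∈ X m ∨ u = t)
    (htsupp : ∀ j, t ∈ X j → v ∈ X j) :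
    G.degree v ≤ w + 1 ∧ TreewidthLE (starMesh G v) w := by
  constructor
  · rw [← card_neighborFinset_eq_degree]
    calc (G.neighborFinset v).card ≤ (insert t ((X m).erase v)).card := by
          apply Finset.card_le_card
          intro u hu
          have hadj := (SimpleGraph.mem_neighborFinset _ _ _).1 hu
          have hune : u ≠ v := fun h => G.irrefl (h ▸ hadj)
          rcases hN u hadj with h | h
          · exact Finset.mem_insert.2 (Or.inr (Finset.mem_erase.2 ⟨hune, h⟩))
          · exact Finset.mem_insert.2 (Or.inl h)
      _ ≤ ((X m).erase v).card + 1 := Finset.card_insert_le _ _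
      _ ≤ (X m).card - 1 + 1 := by rw [Finset.card_erase_of_mem hmv]
      _ ≤ w + 1 := by
          have h1 := hw m
          have h2 : 1 ≤ (X m).card := Finset.card_pos.2 ⟨v, hmv⟩
          omega
  · classical
    apply main_decomp htd.isTree
      (fun j => if v ∈ X j then insert t ((X j).erase v) else (X j).erase v)
    · intro j
      by_cases hvj : v ∈ X j
      · simp only [hvj, if_true]
        calc (insert t ((X j).erase v)).card ≤ ((X j).erase v).card + 1 :=
              Finset.card_insert_le _ _
          _ = (X j).card - 1 + 1 := by rw [Finset.card_erase_of_mem hvj]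
          _ ≤ w + 1 := by
              have h1 := hw j
              have h2 : 1 ≤ (X j).card := Finset.card_pos.2 ⟨v, hvj⟩
              omega
      · simp only [hvj, if_false]
        exact le_trans (Finset.card_le_card (Finset.erase_subset _ _)) (hw j)
    · intro j
      by_cases hvj : v ∈ X j <;> simp [hvj, Finset.mem_insert, Ne.symm htv]
    · intro x hx
      obtain ⟨j, hj⟩ := htd.mem_bag x
      refine ⟨j, ?_⟩
      by_cases hvj : v ∈ X j <;>
        simp [hvj, Finset.mem_insert, Finset.mem_erase, hx, hj]
    · rintro ⟨x, hx⟩ ⟨y, hy⟩ (⟨hne, hadj⟩ : _ ∧ _)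
      rcases hadj with hadj | ⟨hxv, hyv⟩
      · obtain ⟨j, hj1, hj2⟩ := htd.edge_bag x y hadj
        refine ⟨j, ?_, ?_⟩ <;> by_cases hvj : v ∈ X j <;>
          simp [hvj, Finset.mem_insert, Finset.mem_erase, hx, hy, hj1, hj2]
      · refine ⟨m, ?_, ?_⟩
        · rcases hN x hxv.symm with h | h <;>
            simp [hmv, Finset.mem_insert, Finset.mem_erase, hx, h]
        · rcases hN y hyv.symm with h | h <;>
            simp [hmv, Finset.mem_insert, Finset.mem_erase, hy, h]
    · intro x hx
      by_cases hxt : x = t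
      · subst hxt
        have hset : {j | x ∈ (if v ∈ X j then insert x ((X j).erase v) else (X j).erase v)}
            = {j | v ∈ X j} := by
          ext j
          by_cases hvj : v ∈ X j <;>
            simp [hvj, Finset.mem_insert, Finset.mem_erase, hx]
          intro hxj
          exact absurd (htsupp j hxj) hvj
        rw [hset]
        exact htd.support_connected v
      · have hset : {j | x ∈ (if v ∈ X j then insert t ((X j).erase v) else (X j).erase v)}
            = {j | x ∈ X j} := by
          ext j
          by_cases hvj : v ∈ X j <;>
            simp [hvj, Finset.mem_insert, Finset.mem_erase, hx, hxt]
        rw [hset]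
        exact htd.support_connected x

end Main

section BadCase
variable {V I : Type*}

lemma private_only {T : SimpleGraph I} {X : I → Finset V} {i j : I}
    (huniq : ∀ x, T.Adj i x → x = j) {p : V} (hpi : p ∈ X i) (hpj : p ∉ X j)
    (hconn : (T.induce {l | p ∈ X l}).Connected) : ∀ l, p ∈ X l → l = i := by
  intro l hl
  by_contra hne
  obtain ⟨r⟩ := hconn ⟨i, hpi⟩ ⟨l, hl⟩
  have hnil : ¬ r.Nil :=
    Walk.not_nil_of_ne (fun h => hne (congrArg Subtype.val h).symm)
  have hadj : (T.induce {l | p ∈ X l}).Adj ⟨i, hpi⟩ (r.getVert 1) := Walk.adj_snd hnil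
  have hj : (r.getVert 1).1 = j := huniq _ hadj
  have hmem := (r.getVert 1).2
  rw [hj] at hmem
  exact hpj hmem

lemma bad_case [Fintype V] [DecidableEq V] [Fintype I] [DecidableEq I]
    (G : SimpleGraph V) [DecidableRel G.Adj] (s d : V) (w : ℕ)
    (hex : ∃ v : V, v ≠ s ∧ v ≠ d)
    (T : SimpleGraph I) [DecidableRel T.Adj] (X : I → Finset V)
    (htd : IsTreeDecomp G T X)
    (hw : ∀ i : I, (X i).card ≤ w + 1)
    (i₁ i₂ j₁ : I) (hne : i₁ ≠ i₂)
    (hsonly : ∀ l, s ∈ X l → l = i₁)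
    (hdonly : ∀ l, d ∈ X l → l = i₂)
    (hj₁ : ∀ x, T.Adj i₁ x → x = j₁)
    (hXi₁ : X i₁ = insert s (X j₁)) (hsj : s ∉ X j₁)
    (hleaf2 : ∀ g, T.degree g = 1 → g = i₁ ∨ g = i₂) :
    ∃ v : V, v ≠ s ∧ v ≠ d ∧ G.degree v ≤ w + 1 ∧ TreewidthLE (starMesh G v) w := by
  classical
  have hT := htd.isTree
  obtain ⟨W, hW, hWuniq⟩ := hT.existsUnique_path i₁ i₂
  set k := W.length with hkdef
  have hk0 : k ≠ 0 := fun h => hne (Walk.eq_of_length_eq_zero h)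
  -- every index is on the path W
  have onto : ∀ l : I, ∃ c, c ≤ k ∧ W.getVert c = l := by
    intro l
    by_cases hl : l = i₁
    · exact ⟨0, Nat.zero_le _, by rw [Walk.getVert_zero, hl]⟩
    obtain ⟨r0⟩ := hT.isConnected i₁ l
    obtain ⟨g, q, hq, hsub, hcl⟩ := extend_to_leaf (Fintype.card I)
      (r0.toPath : T.Walk i₁ l) (r0.toPath).2 (by omega)
    have hlq : l ∈ q.support := hsub l (Walk.end_mem_support _)
    have hgne : g ≠ i₁ := by
      rintro rfl
      rw [isPath_loop_eq_nil hq] at hlq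
      simp only [Walk.support_nil, List.mem_singleton] at hlq
      exact hl hlq
    have hdeg : T.degree g = 1 :=
      endpoint_degree_one hT (fun h => hgne h.symm) hq hcl
    rcases hleaf2 g hdeg with rfl | rfl
    · exact absurd rfl hgne
    · have hqW : q = W := tree_path_unique hT hq hW
      rw [hqW] at hlq
      obtain ⟨c, hc1, hc2⟩ := Walk.mem_support_iff_exists_getVert.1 hlq
      exact ⟨c, hc2, hc1⟩
  have hinj := getVert_injOn' hW
  have hadj01 : T.Adj i₁ (W.getVert 1) := Walk.adj_snd (Walk.not_nil_of_ne hne)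
  have hW1 : W.getVert 1 = j₁ := hj₁ _ hadj01
  have hP0 : X (W.getVert 0) = insert s (X (W.getVert 1)) := by
    rw [Walk.getVert_zero, hW1, hXi₁]
  have hsP1 : s ∉ X (W.getVert 1) := by rwa [hW1]
  have hsc : ∀ c, c ≤ k → s ∈ X (W.getVert c) → c = 0 := by
    intro c hc hs
    have h1 : W.getVert c = i₁ := hsonly _ hs
    have h2 : W.getVert 0 = i₁ := Walk.getVert_zero W
    exact hinj c hc 0 (Nat.zero_le _) (h1.trans h2.symm)
  have hdc : ∀ c, c ≤ k → d ∈ X (W.getVert c) → c = k := by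
    intro c hc hd
    have h1 : W.getVert c = i₂ := hdonly _ hd
    have h2 : W.getVert k = i₂ := Walk.getVert_length W
    exact hinj c hc k (le_refl _) (h1.trans h2.symm)
  -- the first "forget" position
  have hexist : ∃ c, 1 ≤ c ∧ c ≤ k ∧ (c = k ∨ ∃ u ∈ X (W.getVert c), u ∉ X (W.getVert (c+1))) :=
    ⟨k, by omega, le_refl _, Or.inl rfl⟩
  let m := Nat.find hexist
  obtain ⟨hm1, hmk_le, hmor⟩ := Nat.find_spec hexist
  have hmin : ∀ c, c < m → ¬ (1 ≤ c ∧ c ≤ k ∧ (c = k ∨ ∃ u ∈ X (W.getVert c), u ∉ X (W.getVert (c+1)))) :=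
    fun c hc => Nat.find_min hexist hc
  have hstep : ∀ c, 1 ≤ c → c < m → X (W.getVert c) ⊆ X (W.getVert (c+1)) := by
    intro c h1 hc
    have := hmin c hc
    push_neg at this
    have h3 := this h1 (by omega)
    exact fun u hu => h3.2 u hu
  have hchain : ∀ n c, 1 ≤ c → c + n ≤ m → X (W.getVert c) ⊆ X (W.getVert (c + n)) := by
    intro n
    induction n with
    | zero => intro c _ _; simp
    | succ n ih =>
      intro c h1 hcn
      have h2 : X (W.getVert c) ⊆ X (W.getVert (c + n)) := ih c h1 (by omega)
      have h3 : X (W.getVert (c + n)) ⊆ X (W.getVert (c + n + 1)) :=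
        hstep (c + n) (by omega) (by omega)
      have : c + (n + 1) = c + n + 1 := by omega
      rw [this]
      exact h2.trans h3
  have hchain' : ∀ c, 1 ≤ c → c ≤ m → X (W.getVert c) ⊆ X (W.getVert m) := by
    intro c h1 h2
    have := hchain (m - c) c h1 (by omega)
    have heq : c + (m - c) = m := by omega
    rwa [heq] at this
  -- choose the vertex v
  obtain ⟨v, hvs, hvd, hvm, hub⟩ :
      ∃ v, v ≠ s ∧ v ≠ d ∧ v ∈ X (W.getVert m) ∧
        (∀ c, 1 ≤ c → c ≤ k → v ∈ X (W.getVert c) → c ≤ m) := by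
    by_cases hmk : m = k
    · obtain ⟨v, hvs', hvd'⟩ := hex
      obtain ⟨l, hvl⟩ := htd.mem_bag v
      obtain ⟨c, hck, rfl⟩ := onto l
      have hvk : v ∈ X (W.getVert k) := by
        rcases Nat.eq_zero_or_pos c with rfl | hc1
        · have hv1 : v ∈ X (W.getVert 1) := by
            rw [hP0] at hvl
            rcases Finset.mem_insert.1 hvl with rfl | h
            · exact absurd rfl hvs'
            · exact h
          have := hchain' 1 (le_refl _) (by omega)
          rw [hmk] at this
          exact this hv1
        · have := hchain' c hc1 (by omega)
          rw [hmk] at this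
          exact this hvl
      exact ⟨v, hvs', hvd', by rwa [hmk], fun c _ hc _ => by omega⟩
    · obtain ⟨v, hvm', hvm1⟩ := hmor.resolve_left hmk
      have hmk0 : m ≤ k := hmk_le
      have hvs' : v ≠ s := by
        rintro rfl
        have := hsc m hmk0 hvm'
        omega
      have hvd' : v ≠ d := by
        rintro rfl
        exact hmk (hdc m hmk0 hvm')
      refine ⟨v, hvs', hvd', hvm', ?_⟩
      intro c h1 hc hvc
      by_contra hcon
      push_neg at hcon
      have hstep2 : v ∈ X (W.getVert (m+1)) :=
        interval_lemma hT (htd.support_connected v) hW (a := m) (b := c) (c := m+1) (by omega) (by omega)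
          (by omega) hvm' hvc
      exact hvm1 hstep2
  -- the neighbours of v
  have hN : ∀ u, G.Adj v u → u ∈ X (W.getVert m) ∨ u = s := by
    intro u hadj
    by_cases hus : u = s
    · exact Or.inr hus
    obtain ⟨l, hvl, hul⟩ := htd.edge_bag v u hadj
    obtain ⟨c, hck, rfl⟩ := onto l
    rcases Nat.eq_zero_or_pos c with rfl | hc1
    · rw [hP0] at hvl hul
      have hv1 : v ∈ X (W.getVert 1) := by
        rcases Finset.mem_insert.1 hvl with rfl | h
        · exact absurd rfl hvs
        · exact h
      have hu1 : u ∈ X (W.getVert 1) := by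
        rcases Finset.mem_insert.1 hul with rfl | h
        · exact absurd rfl hus
        · exact h
      have h1m : (1 : ℕ) ≤ m := hm1
      exact Or.inl (hchain' 1 (le_refl _) h1m hu1)
    · have hcm : c ≤ m := hub c hc1 hck hvl
      exact Or.inl (hchain' c hc1 hcm hul)
  -- conclude
  by_cases hv0 : v ∈ X i₁
  · have htsupp : ∀ j, s ∈ X j → v ∈ X j := by
      intro j hsj'
      rw [hsonly j hsj']
      exact hv0
    obtain ⟨hdeg, htw⟩ := elim_B htd hw (Ne.symm hvs) hvm hN htsupp
    exact ⟨v, hvs, hvd, hdeg, htw⟩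
  · have hN' : ∀ u, G.Adj v u → u ∈ X (W.getVert m) := by
      intro u hadj
      rcases hN u hadj with h | rfl
      · exact h
      · exfalso
        obtain ⟨l, hvl, hsl⟩ := htd.edge_bag v u hadj
        rw [hsonly l hsl] at hvl
        exact hv0 hvl
    obtain ⟨hdeg, htw⟩ := elim_A htd hw hN'
    exact ⟨v, hvs, hvd, hdeg, htw⟩

end BadCase


/-- Given a nice tree decomposition of width at most `w` with at least two bags in which
every leaf bag strictly contains its parent bag, there is a non-terminal vertex of degree
at most `w + 1` whose star-mesh elimination does not increase the treewidth beyond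
`w`. -/
theorem exists_low_degree_elimination {V I : Type*} [Fintype V] [DecidableEq V]
    [Fintype I] [DecidableEq I]
    (G : SimpleGraph V) [DecidableRel G.Adj] (s d : V) (hsd : s ≠ d) (w : ℕ)
    (hex : ∃ v : V, v ≠ s ∧ v ≠ d)
    (T : SimpleGraph I) [DecidableRel T.Adj] (X : I → Finset V)
    (htd : IsTreeDecomp G T X) (hnice : IsNice T X)
    (hw : ∀ i : I, (X i).card ≤ w + 1)
    (h2 : 2 ≤ Fintype.card I)
    (hleaf : ∀ i j : I, T.degree i = 1 → T.Adj i j → X j ⊂ X i) :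
    ∃ v : V, v ≠ s ∧ v ≠ d ∧ G.degree v ≤ w + 1 ∧ TreewidthLE (starMesh G v) w := by
  classical
  have hT := htd.isTree
  -- every leaf has a unique neighbour and a private vertex
  have privat : ∀ i, T.degree i = 1 → ∃ j p, (∀ x, T.Adj i x → x = j) ∧ p ∉ X j ∧
      X i = insert p (X j) := by
    intro i hdeg
    obtain ⟨j, hadj, huniq⟩ := leaf_nbr hdeg
    have hss := hleaf i j hdeg hadj
    rcases hnice i j hadj with heq | ⟨p, hp, heq⟩ | ⟨p, hp, heq⟩
    · exact absurd heq.symm hss.ne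
    · exact ⟨j, p, huniq, hp, heq⟩
    · exfalso
      exact hss.2 (heq ▸ Finset.subset_insert p (X i))
  -- good case: some leaf has a private vertex different from both terminals
  by_cases hgood : ∃ (g j : I) (p : V), (∀ x, T.Adj g x → x = j) ∧ p ∉ X j ∧
      X g = insert p (X j) ∧ p ≠ s ∧ p ≠ d
  · obtain ⟨g, j, p, huniq, hpj, heq, hps, hpd⟩ := hgood
    have hpg : p ∈ X g := heq ▸ Finset.mem_insert_self p (X j)
    have honly : ∀ l, p ∈ X l → l = g :=
      private_only huniq hpg hpj (htd.support_connected p)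
    have hN : ∀ u, G.Adj p u → u ∈ X g := by
      intro u hadj
      obtain ⟨l, h1, h2⟩ := htd.edge_bag p u hadj
      rw [honly l h1] at h2
      exact h2
    obtain ⟨hdeg, htw⟩ := elim_A htd hw hN
    exact ⟨p, hps, hpd, hdeg, htw⟩
  · push_neg at hgood
    -- two leaves
    obtain ⟨a, b, hab, ha, hb⟩ := exists_two_leaves hT h2
    obtain ⟨ja, pa, huniqa, hpja, heqa⟩ := privat a ha
    obtain ⟨jb, pb, huniqb, hpjb, heqb⟩ := privat b hb
    have hpa : pa ∈ X a := heqa ▸ Finset.mem_insert_self pa (X ja)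
    have hpb : pb ∈ X b := heqb ▸ Finset.mem_insert_self pb (X jb)
    have honlya : ∀ l, pa ∈ X l → l = a :=
      private_only huniqa hpa hpja (htd.support_connected pa)
    have honlyb : ∀ l, pb ∈ X l → l = b :=
      private_only huniqb hpb hpjb (htd.support_connected pb)
    have hpab : pa ≠ pb := by
      rintro rfl
      exact hab (honlya b hpb).symm
    have hcasea : pa = s ∨ pa = d := by
      by_contra hc
      push_neg at hc
      exact hc.2 (hgood a ja pa huniqa hpja heqa hc.1)
    have hcaseb : pb = s ∨ pb = d := by
      by_contra hc
      push_neg at hc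
      exact hc.2 (hgood b jb pb huniqb hpjb heqb hc.1)
    -- all leaves are a or b
    have hleaf2 : ∀ g, T.degree g = 1 → g = a ∨ g = b := by
      intro g hdeg
      obtain ⟨jg, pg, huniqg, hpjg, heqg⟩ := privat g hdeg
      have hpg : pg ∈ X g := heqg ▸ Finset.mem_insert_self pg (X jg)
      have hcg : pg = s ∨ pg = d := by
        by_contra hc
        push_neg at hc
        exact hc.2 (hgood g jg pg huniqg hpjg heqg hc.1)
      have : pg = pa ∨ pg = pb := by
        rcases hcasea with ha' | ha' <;> rcases hcaseb with hb' | hb' <;>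
          rcases hcg with hg' | hg' <;>
          first
            | (exact absurd (ha'.trans hb'.symm) hpab)
            | (exact Or.inl (hg'.trans ha'.symm))
            | (exact Or.inr (hg'.trans hb'.symm))
      rcases this with rfl | rfl
      · exact Or.inl (honlya g hpg)
      · exact Or.inr (honlyb g hpg)
    rcases hcasea with has | had
    · have hbd : pb = d := by
        rcases hcaseb with h | h
        · exact absurd (has.trans h.symm) hpab
        · exact h
      subst has
      subst hbd
      exact bad_case G pa pb w hex T X htd hw a b ja hab honlya honlyb huniqa heqa hpja hleaf2
    · have hbs : pb = s := by
        rcases hcaseb with h | h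
        · exact h
        · exact absurd (had.trans h.symm) hpab
      subst had
      subst hbs
      obtain ⟨v, h1, h2, h3, h4⟩ := bad_case G pa pb w
        (hex.imp fun v hv => ⟨hv.2, hv.1⟩) T X htd hw a b ja hab honlya honlyb huniqa heqa
        hpja hleaf2
      exact ⟨v, h2, h1, h3, h4⟩
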